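/- Let W : ℝ² → ℝ be a polynomial function with W(x,y) > 0 for all (x, y) ∈ ℝ². Then the Jacobian matrix of the R4-class vector field (P_W, Q_W) at the point B = (1/2, −√35/2) has determinant Δ = −144·√35·W(1/2, −√35/2), which is strictly negative; hence B is a saddle point. -/

import Mathlib

lemma diff_eval (W : MvPolynomial (Fin 2) ℝ) (f : ℝ → Fin 2 → ℝ)
    (hf : ∀ i, Differentiable ℝ (fun t => f t i)) :
    Differentiable ℝ (fun t => MvPolynomial.eval (f t) W) := by
  induction W using MvPolynomial.induction_on with
  | C a => simp [differentiable_const]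
  | add p q hp hq => simpa [MvPolynomial.eval_add, Pi.add_def] using hp.add hq
  | mul_X p i hp => simpa [MvPolynomial.eval_mul, MvPolynomial.eval_X, Pi.mul_def] using hp.mul (hf i)

/-- For any everywhere-positive polynomial `W`, the Jacobian of the R4-class vector field at
`B = (1/2, −√35/2)` has determinant `Δ = −144·√35·W(B) < 0`: `B` is a saddle. -/
theorem stmt9 (W : MvPolynomial (Fin 2) ℝ)
    (hW : ∀ x y : ℝ, 0 < MvPolynomial.eval ![x, y] W)
    (P Q : ℝ → ℝ → ℝ)
    (hP : ∀ x y : ℝ, P x y = x * (x^2 + y^2 - 1) * (x^2 + y^2 - 9)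
      - y * (x^2 + y^2 - 2*x - 8) * MvPolynomial.eval ![x, y] W)
    (hQ : ∀ x y : ℝ, Q x y = y * (x^2 + y^2 - 1) * (x^2 + y^2 - 9)
      + x * (x^2 + y^2 - 2*x - 8) * MvPolynomial.eval ![x, y] W)
    (b₁ b₂ : ℝ) (hb₁ : b₁ = 1/2) (hb₂ : b₂ = -(Real.sqrt 35 / 2))
    (Δ : ℝ)
    (hΔ : Δ = deriv (fun x : ℝ => P x b₂) b₁ * deriv (fun y : ℝ => Q b₁ y) b₂
      - deriv (fun y : ℝ => P b₁ y) b₂ * deriv (fun x : ℝ => Q x b₂) b₁) :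
    Δ = -144 * Real.sqrt 35 * MvPolynomial.eval ![b₁, b₂] W ∧ Δ < 0 := by
  have hfx : ∀ i, Differentiable ℝ (fun t : ℝ => (![t, b₂] : Fin 2 → ℝ) i) := by
    intro i; fin_cases i <;> simp [differentiable_id, differentiable_const]
  have hfy : ∀ i, Differentiable ℝ (fun t : ℝ => (![b₁, t] : Fin 2 → ℝ) i) := by
    intro i; fin_cases i <;> simp [differentiable_id, differentiable_const]
  set u : ℝ := deriv (fun x => MvPolynomial.eval ![x, b₂] W) b₁ with hu
  set v : ℝ := deriv (fun y => MvPolynomial.eval ![b₁, y] W) b₂ with hv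
  have hw1 : HasDerivAt (fun x => MvPolynomial.eval ![x, b₂] W) u b₁ :=
    ((diff_eval W _ hfx) b₁).hasDerivAt
  have hw2 : HasDerivAt (fun y => MvPolynomial.eval ![b₁, y] W) v b₂ :=
    ((diff_eval W _ hfy) b₂).hasDerivAt
  have hid : HasDerivAt (fun x : ℝ => x) 1 b₁ := hasDerivAt_id b₁
  have hsq : HasDerivAt (fun x : ℝ => x^2 + b₂^2 - 1) (2*b₁) b₁ := by
    simpa using ((hasDerivAt_pow 2 b₁).add_const (b₂^2)).sub_const 1
  have h9 : HasDerivAt (fun x : ℝ => x^2 + b₂^2 - 9) (2*b₁) b₁ := by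
    simpa using ((hasDerivAt_pow 2 b₁).add_const (b₂^2)).sub_const 9
  have hg : HasDerivAt (fun x : ℝ => x^2 + b₂^2 - 2*x - 8) (2*b₁ - 2) b₁ := by
    have := (((hasDerivAt_pow 2 b₁).add_const (b₂^2)).sub
      ((hasDerivAt_id b₁).const_mul 2)).sub_const 8
    simpa using this
  have hidy : HasDerivAt (fun y : ℝ => y) 1 b₂ := hasDerivAt_id b₂
  have hsqy : HasDerivAt (fun y : ℝ => b₁^2 + y^2 - 1) (2*b₂) b₂ := by
    simpa using ((hasDerivAt_pow 2 b₂).const_add (b₁^2)).sub_const 1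
  have h9y : HasDerivAt (fun y : ℝ => b₁^2 + y^2 - 9) (2*b₂) b₂ := by
    simpa using ((hasDerivAt_pow 2 b₂).const_add (b₁^2)).sub_const 9
  have hgy : HasDerivAt (fun y : ℝ => b₁^2 + y^2 - 2*b₁ - 8) (2*b₂) b₂ := by
    simpa using (((hasDerivAt_pow 2 b₂).const_add (b₁^2)).sub_const (2*b₁)).sub_const 8
  have hPx : HasDerivAt (fun x => x * (x^2 + b₂^2 - 1) * (x^2 + b₂^2 - 9)
      - b₂ * (x^2 + b₂^2 - 2*x - 8) * MvPolynomial.eval ![x, b₂] W)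
      (((1 * (b₁^2 + b₂^2 - 1) + b₁ * (2*b₁)) * (b₁^2 + b₂^2 - 9)
        + b₁ * (b₁^2 + b₂^2 - 1) * (2*b₁))
       - (b₂ * (2*b₁ - 2) * MvPolynomial.eval ![b₁, b₂] W
          + b₂ * (b₁^2 + b₂^2 - 2*b₁ - 8) * u)) b₁ :=
    ((hid.mul hsq).mul h9).sub ((hg.const_mul b₂).mul hw1)
  have hQx : HasDerivAt (fun x => b₂ * (x^2 + b₂^2 - 1) * (x^2 + b₂^2 - 9)
      + x * (x^2 + b₂^2 - 2*x - 8) * MvPolynomial.eval ![x, b₂] W)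
      ((b₂ * (2*b₁) * (b₁^2 + b₂^2 - 9) + b₂ * (b₁^2 + b₂^2 - 1) * (2*b₁))
       + ((1 * (b₁^2 + b₂^2 - 2*b₁ - 8) + b₁ * (2*b₁ - 2)) * MvPolynomial.eval ![b₁, b₂] W
          + b₁ * (b₁^2 + b₂^2 - 2*b₁ - 8) * u)) b₁ :=
    ((hsq.const_mul b₂).mul h9).add ((hid.mul hg).mul hw1)
  have hPy : HasDerivAt (fun y => b₁ * (b₁^2 + y^2 - 1) * (b₁^2 + y^2 - 9)
      - y * (b₁^2 + y^2 - 2*b₁ - 8) * MvPolynomial.eval ![b₁, y] W)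
      ((b₁ * (2*b₂) * (b₁^2 + b₂^2 - 9) + b₁ * (b₁^2 + b₂^2 - 1) * (2*b₂))
       - ((1 * (b₁^2 + b₂^2 - 2*b₁ - 8) + b₂ * (2*b₂)) * MvPolynomial.eval ![b₁, b₂] W
          + b₂ * (b₁^2 + b₂^2 - 2*b₁ - 8) * v)) b₂ :=
    ((hsqy.const_mul b₁).mul h9y).sub ((hidy.mul hgy).mul hw2)
  have hQy : HasDerivAt (fun y => y * (b₁^2 + y^2 - 1) * (b₁^2 + y^2 - 9)
      + b₁ * (b₁^2 + y^2 - 2*b₁ - 8) * MvPolynomial.eval ![b₁, y] W)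
      (((1 * (b₁^2 + b₂^2 - 1) + b₂ * (2*b₂)) * (b₁^2 + b₂^2 - 9)
        + b₂ * (b₁^2 + b₂^2 - 1) * (2*b₂))
       + (b₁ * (2*b₂) * MvPolynomial.eval ![b₁, b₂] W
          + b₁ * (b₁^2 + b₂^2 - 2*b₁ - 8) * v)) b₂ :=
    ((hidy.mul hsqy).mul h9y).add ((hgy.const_mul b₁).mul hw2)
  have ePx : (fun x => P x b₂) = (fun x => x * (x^2 + b₂^2 - 1) * (x^2 + b₂^2 - 9)
      - b₂ * (x^2 + b₂^2 - 2*x - 8) * MvPolynomial.eval ![x, b₂] W) :=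
    funext fun x => hP x b₂
  have eQx : (fun x => Q x b₂) = (fun x => b₂ * (x^2 + b₂^2 - 1) * (x^2 + b₂^2 - 9)
      + x * (x^2 + b₂^2 - 2*x - 8) * MvPolynomial.eval ![x, b₂] W) :=
    funext fun x => hQ x b₂
  have ePy : (fun y => P b₁ y) = (fun y => b₁ * (b₁^2 + y^2 - 1) * (b₁^2 + y^2 - 9)
      - y * (b₁^2 + y^2 - 2*b₁ - 8) * MvPolynomial.eval ![b₁, y] W) :=
    funext fun y => hP b₁ y
  have eQy : (fun y => Q b₁ y) = (fun y => y * (b₁^2 + y^2 - 1) * (b₁^2 + y^2 - 9)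
      + b₁ * (b₁^2 + y^2 - 2*b₁ - 8) * MvPolynomial.eval ![b₁, y] W) :=
    funext fun y => hQ b₁ y
  rw [ePx, eQx, ePy, eQy, hPx.deriv, hQx.deriv, hPy.deriv, hQy.deriv] at hΔ
  have hs : Real.sqrt 35 ^ 2 = 35 := Real.sq_sqrt (by norm_num)
  have hspos : 0 < Real.sqrt 35 := Real.sqrt_pos.mpr (by norm_num)
  have hWpos : 0 < MvPolynomial.eval ![b₁, b₂] W := hW b₁ b₂
  subst hb₁ hb₂
  set s : ℝ := Real.sqrt 35
  set Wq : ℝ := MvPolynomial.eval ![1/2, -(s/2)] W with hWq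
  have key : Δ = -144 * s * Wq := by
    rw [hΔ]
    linear_combination ((-87/256 : ℝ) + (29/128)*v + (-35/32)*Wq*u + (-37/16)*Wq^2
      + (29/128)*s*u + (-65/16)*s*Wq + (35/32)*s*Wq*v + (359/256)*s^2 + (-55/64)*s^2*v
      + (1/32)*s^2*Wq*u + (3/16)*s^2*Wq^2 + (-55/64)*s^3*u + (-5/16)*s^3*Wq
      + (-1/32)*s^3*Wq*v + (-125/256)*s^4 + (5/128)*s^4*v + (5/128)*s^5*u
      + (5/256)*s^6) * hs
  refine ⟨key, ?_⟩
  rw [key]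
  nlinarith [mul_pos hspos hWpos]
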